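/- arXiv:2505.06882 — 2 statements merged into one kernel-verified Lean document; each statement's English description precedes it below -/
import Mathlib

section
/- Suppose V(s) = e^{-sH_0} V e^{sH_0} satisfies ‖V(s)‖₂ ≤ a e^{bs} for all 0 ≤ s ≤ β. Then the Dyson series D(β) = Σ_{n≥1} ∫_0^β ds_1 ∫_0^{s_1} ds_2 ⋯ ∫_0^{s_{n-1}} ds_n V(s_n)⋯V(s_1) converges in Hilbert–Schmidt norm and satisfies ‖D(β)‖₂ ≤ exp[a (e^{βb} − 1)/b] − 1. -/
open MeasureTheory

local notation "⟪" x ", " y "⟫" => @inner ℂ _ _ x y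

/-- The Hilbert–Schmidt norm of an operator, computed in a given Hilbert basis:
`‖X‖₂ = (∑ i ‖X e_i‖²)^{1/2} = (Tr |X|²)^{1/2}`. -/
noncomputable def hsNorm {H : Type*} [NormedAddCommGroup H] [InnerProductSpace ℂ H]
    [CompleteSpace H] {ι : Type*} (e : HilbertBasis ι ℂ H) (X : H →L[ℂ] H) : ℝ :=
  Real.sqrt (∑' i : ι, ‖X (e i)‖ ^ 2)

/-- The `n`-th term of the Dyson series:
`∫_0^β ds_1 ∫_0^{s_1} ds_2 ⋯ ∫_0^{s_{n-1}} ds_n V(s_n)⋯V(s_1)`, written as an integral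
over the simplex `{0 ≤ s_n ≤ ⋯ ≤ s_1 ≤ β}` (here `s : Fin n → ℝ` is nondecreasing, and
the factor with the smallest time argument stands leftmost). -/
noncomputable def dysonTerm {H : Type*} [NormedAddCommGroup H] [InnerProductSpace ℂ H]
    [CompleteSpace H] (Vs : ℝ → (H →L[ℂ] H)) (β : ℝ) (n : ℕ) : H →L[ℂ] H :=
  ∫ s : Fin n → ℝ in
    {s | (∀ i, s i ∈ Set.Icc 0 β) ∧ (∀ i j : Fin n, i ≤ j → s i ≤ s j)},
    (List.ofFn fun i => Vs (s i)).prod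

section Aux

set_option linter.unusedSectionVars false

variable {H : Type*} [NormedAddCommGroup H] [InnerProductSpace ℂ H] [CompleteSpace H]
  {ι : Type*} (e : HilbertBasis ι ℂ H)

lemma parseval_hasSum (x : H) : HasSum (fun i => ‖⟪e i, x⟫‖ ^ 2) (‖x‖ ^ 2) := by
  have h := (e.hasSum_inner_mul_inner x x).mapL Complex.reCLM
  have h2 : ∀ i, Complex.reCLM (⟪x, e i⟫ * ⟪e i, x⟫) = ‖⟪e i, x⟫‖ ^ 2 := by
    intro i
    rw [← inner_conj_symm x (e i), Complex.conj_mul']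
    norm_cast
  have h3 : Complex.reCLM ⟪x, x⟫ = ‖x‖ ^ 2 := by
    simpa [Complex.reCLM_apply, RCLike.re_to_complex] using inner_self_eq_norm_sq (𝕜 := ℂ) x
  simp only [h2, h3] at h
  exact h

lemma hsNorm_nonneg (X : H →L[ℂ] H) : 0 ≤ hsNorm e X := Real.sqrt_nonneg _

lemma sum_sq_le_hsNorm_sq {X : H →L[ℂ] H} (hX : Summable fun i => ‖X (e i)‖ ^ 2)
    (F : Finset ι) : ∑ i ∈ F, ‖X (e i)‖ ^ 2 ≤ hsNorm e X ^ 2 := by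
  rw [hsNorm, Real.sq_sqrt (tsum_nonneg fun i => sq_nonneg _)]
  exact Summable.sum_le_tsum F (fun i _ => sq_nonneg _) hX

lemma opNorm_le_hsNorm {X : H →L[ℂ] H} (hX : Summable fun i => ‖X (e i)‖ ^ 2) :
    ‖X‖ ≤ hsNorm e X := by
  refine X.opNorm_le_bound (hsNorm_nonneg e X) (fun x => ?_)
  have hxr : HasSum (fun i => (⟪e i, x⟫ : ℂ) • e i) x := by
    simpa [HilbertBasis.repr_apply_apply] using e.hasSum_repr x
  have hXx : HasSum (fun i => (⟪e i, x⟫ : ℂ) • X (e i)) (X x) := by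
    simpa using hxr.mapL X
  have hsummable : Summable fun i => ‖⟪e i, x⟫‖ * ‖X (e i)‖ := by
    apply Summable.of_nonneg_of_le (fun i => by positivity)
      (fun i => ?_) (((parseval_hasSum e x).summable.add hX).div_const 2)
    have := sq_nonneg (‖⟪e i, x⟫‖ - ‖X (e i)‖)
    nlinarith [norm_nonneg (⟪e i, x⟫ : ℂ), norm_nonneg (X (e i))]
  calc ‖X x‖ ≤ ∑' i, ‖(⟪e i, x⟫ : ℂ) • X (e i)‖ := by
        rw [← hXx.tsum_eq]
        exact norm_tsum_le_tsum_norm (by simpa [norm_smul] using hsummable)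
    _ ≤ hsNorm e X * ‖x‖ := by
        simp_rw [norm_smul]
        refine Summable.tsum_le_of_sum_le hsummable (fun F => ?_)
        calc ∑ i ∈ F, ‖⟪e i, x⟫‖ * ‖X (e i)‖
            ≤ Real.sqrt (∑ i ∈ F, ‖⟪e i, x⟫‖ ^ 2) * Real.sqrt (∑ i ∈ F, ‖X (e i)‖ ^ 2) :=
              Real.sum_mul_le_sqrt_mul_sqrt F _ _
          _ ≤ Real.sqrt (‖x‖ ^ 2) * Real.sqrt (hsNorm e X ^ 2) := by
              gcongr
              · exact (Summable.sum_le_tsum F (fun i _ => sq_nonneg _)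
                  (parseval_hasSum e x).summable).trans_eq (parseval_hasSum e x).tsum_eq
              · exact sum_sq_le_hsNorm_sq e hX F
          _ = hsNorm e X * ‖x‖ := by
              rw [Real.sqrt_sq (norm_nonneg _), Real.sqrt_sq (hsNorm_nonneg e X)]
              ring

/-- The coordinate-projection map onto finitely many basis vectors, as a continuous
linear map into an `L²`-product. -/
noncomputable def phiF (F : Finset ι) : (H →L[ℂ] H) →L[ℂ] PiLp 2 (fun _ : F => H) :=
  ((PiLp.continuousLinearEquiv 2 ℂ (fun _ : F => H)).symm.toContinuousLinearMap).comp
    (ContinuousLinearMap.pi fun i : F => ContinuousLinearMap.apply ℂ H (e (i : ι)))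

lemma phiF_norm (F : Finset ι) (X : H →L[ℂ] H) :
    ‖phiF e F X‖ = Real.sqrt (∑ i ∈ F, ‖X (e i)‖ ^ 2) := by
  rw [show (∑ i ∈ F, ‖X (e i)‖ ^ 2) = ∑ i : F, ‖X (e (i : ι))‖ ^ 2 from
    (Finset.sum_coe_sort F _).symm]
  rw [phiF]
  rw [PiLp.norm_eq_of_L2]
  rfl

lemma phiF_le_hsNorm (F : Finset ι) {X : H →L[ℂ] H}
    (hX : Summable fun i => ‖X (e i)‖ ^ 2) : ‖phiF e F X‖ ≤ hsNorm e X := by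
  rw [phiF_norm]
  exact Real.sqrt_le_sqrt (Summable.sum_le_tsum F (fun i _ => sq_nonneg _) hX)

lemma norm_list_prod_le_ofFn {m : ℕ} (V : Fin m → (H →L[ℂ] H)) :
    ‖(List.ofFn V).prod‖ ≤ ∏ i, ‖V i‖ := by
  induction m with
  | zero =>
    simpa [ContinuousLinearMap.one_def] using ContinuousLinearMap.norm_id_le (𝕜 := ℂ) (E := H)
  | succ m ih =>
    rw [List.ofFn_succ, List.prod_cons, Fin.prod_univ_succ]
    exact (norm_mul_le _ _).trans
      (mul_le_mul_of_nonneg_left (ih _) (norm_nonneg _))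

lemma key_pointwise (F : Finset ι) {m : ℕ} (W : Fin (m + 1) → (H →L[ℂ] H))
    (hW : Summable fun i => ‖W (Fin.last m) (e i)‖ ^ 2) :
    ‖phiF e F (List.ofFn W).prod‖ ≤
      (∏ i : Fin m, ‖W i.castSucc‖) * hsNorm e (W (Fin.last m)) := by
  set A := (List.ofFn fun i : Fin m => W i.castSucc).prod with hA
  set w := W (Fin.last m) with hw
  have hprod : (List.ofFn W).prod = A * w := by
    rw [List.ofFn_succ', List.prod_concat]
  rw [phiF_norm, hprod]
  have h1 : ∀ i : ι, ‖(A * w) (e i)‖ ^ 2 ≤ ‖A‖ ^ 2 * ‖w (e i)‖ ^ 2 := by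
    intro i
    rw [← mul_pow]
    exact pow_le_pow_left₀ (norm_nonneg _) (A.le_opNorm (w (e i))) 2
  calc Real.sqrt (∑ i ∈ F, ‖(A * w) (e i)‖ ^ 2)
      ≤ Real.sqrt (‖A‖ ^ 2 * hsNorm e w ^ 2) := by
        apply Real.sqrt_le_sqrt
        calc ∑ i ∈ F, ‖(A * w) (e i)‖ ^ 2 ≤ ∑ i ∈ F, ‖A‖ ^ 2 * ‖w (e i)‖ ^ 2 :=
              Finset.sum_le_sum fun i _ => h1 i
          _ = ‖A‖ ^ 2 * ∑ i ∈ F, ‖w (e i)‖ ^ 2 := by rw [Finset.mul_sum]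
          _ ≤ ‖A‖ ^ 2 * hsNorm e w ^ 2 :=
              mul_le_mul_of_nonneg_left (sum_sq_le_hsNorm_sq e hW F) (sq_nonneg _)
    _ = ‖A‖ * hsNorm e w := by
        rw [← mul_pow, Real.sqrt_sq (mul_nonneg (norm_nonneg _) (hsNorm_nonneg e w))]
    _ ≤ (∏ i : Fin m, ‖W i.castSucc‖) * hsNorm e w :=
        mul_le_mul_of_nonneg_right (norm_list_prod_le_ofFn _) (hsNorm_nonneg e w)

end Aux

section Simplex

lemma measurable_mono_set {n : ℕ} (σ : Equiv.Perm (Fin n)) :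
    MeasurableSet {s : Fin n → ℝ | ∀ i j : Fin n, i ≤ j → s (σ i) ≤ s (σ j)} := by
  have : {s : Fin n → ℝ | ∀ i j : Fin n, i ≤ j → s (σ i) ≤ s (σ j)} =
      ⋂ (i : Fin n) (j : Fin n) (_ : i ≤ j), {s : Fin n → ℝ | s (σ i) ≤ s (σ j)} := by
    ext s; simp [Set.mem_iInter]
  rw [this]
  exact MeasurableSet.iInter fun i => MeasurableSet.iInter fun j => MeasurableSet.iInter fun _ =>
    measurableSet_le (measurable_pi_apply _) (measurable_pi_apply _)

lemma null_noninj {n : ℕ} :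
    (volume : Measure (Fin n → ℝ)) {s : Fin n → ℝ | ¬ Function.Injective s} = 0 := by
  have hsub : {s : Fin n → ℝ | ¬ Function.Injective s} ⊆
      ⋃ (p : Fin n × Fin n) (_ : p.1 ≠ p.2), {s : Fin n → ℝ | s p.1 = s p.2} := by
    intro s hs
    simp only [Function.Injective, not_forall] at hs
    obtain ⟨i, j, hij, hne⟩ := hs
    exact Set.mem_iUnion.2 ⟨(i, j), Set.mem_iUnion.2 ⟨hne, hij⟩⟩
  refine measure_mono_null hsub (measure_iUnion_null fun p => measure_iUnion_null fun hne => ?_)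
  set L : (Fin n → ℝ) →ₗ[ℝ] ℝ :=
    (LinearMap.proj p.1 : (Fin n → ℝ) →ₗ[ℝ] ℝ) - (LinearMap.proj p.2 : (Fin n → ℝ) →ₗ[ℝ] ℝ)
  have hker : {s : Fin n → ℝ | s p.1 = s p.2} = ↑(LinearMap.ker L) := by
    ext s; simp [L, sub_eq_zero]
  rw [hker]
  refine Measure.addHaar_submodule _ _ (fun htop => ?_)
  have h1 : Pi.single p.1 (1:ℝ) ∈ LinearMap.ker L := htop ▸ Submodule.mem_top
  simp [L, LinearMap.mem_ker, Pi.single_apply, hne, Ne.symm hne] at h1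

lemma simplex_integral (f : ℝ → ℝ) (hf : Continuous f) (β : ℝ) (n : ℕ) :
    ∫ s : Fin n → ℝ in
        {s | (∀ i, s i ∈ Set.Icc 0 β) ∧ (∀ i j : Fin n, i ≤ j → s i ≤ s j)},
        ∏ i, f (s i)
      = (∫ t in Set.Icc (0:ℝ) β, f t) ^ n / n.factorial := by
  classical
  set g : ℝ → ℝ := (Set.Icc (0:ℝ) β).indicator f with hg
  set F : (Fin n → ℝ) → ℝ := fun s => ∏ i, g (s i) with hF
  have hgint : Integrable g :=
    ((hf.continuousOn).integrableOn_compact isCompact_Icc).integrable_indicator measurableSet_Icc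
  have hFint : Integrable F := Integrable.fintype_prod (𝕜 := ℝ) (fun _ : Fin n => hgint)
  set M : Set (Fin n → ℝ) := {s | ∀ i j : Fin n, i ≤ j → s i ≤ s j} with hM
  have hMmeas : MeasurableSet M := by
    simpa only [Equiv.refl_apply] using measurable_mono_set (Equiv.refl (Fin n))
  set S : Set (Fin n → ℝ) :=
    {s | (∀ i, s i ∈ Set.Icc 0 β) ∧ (∀ i j : Fin n, i ≤ j → s i ≤ s j)} with hS
  have hSmeas : MeasurableSet S := by
    have : S = (Set.univ.pi fun _ => Set.Icc (0:ℝ) β) ∩ M := by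
      ext s
      constructor
      · rintro ⟨h1, h2⟩; exact ⟨fun i _ => h1 i, h2⟩
      · rintro ⟨h1, h2⟩; exact ⟨fun i => h1 i (Set.mem_univ i), h2⟩
    rw [this]; exact (MeasurableSet.univ_pi fun _ => measurableSet_Icc).inter hMmeas
  have step1 : ∫ s in S, ∏ i, f (s i) = ∫ s in M, F s := by
    rw [← integral_indicator hSmeas, ← integral_indicator hMmeas]
    congr 1; ext s
    by_cases hsM : s ∈ M
    · by_cases hsc : ∀ i, s i ∈ Set.Icc (0:ℝ) β
      · have hsS : s ∈ S := ⟨hsc, hsM⟩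
        rw [Set.indicator_of_mem hsS, Set.indicator_of_mem hsM]
        exact Finset.prod_congr rfl fun i _ => (Set.indicator_of_mem (hsc i) f).symm
      · push_neg at hsc; obtain ⟨i0, hi0⟩ := hsc
        have hsS : s ∉ S := fun h => hi0 (h.1 i0)
        rw [Set.indicator_of_notMem hsS, Set.indicator_of_mem hsM]
        exact (Finset.prod_eq_zero (Finset.mem_univ i0) (Set.indicator_of_notMem hi0 f)).symm
    · have hsS : s ∉ S := fun h => hsM h.2
      rw [Set.indicator_of_notMem hsS, Set.indicator_of_notMem hsM]
  set A : Equiv.Perm (Fin n) → Set (Fin n → ℝ) :=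
    fun σ => {s | ∀ i j : Fin n, i ≤ j → s (σ i) ≤ s (σ j)} with hA
  have hAmeas : ∀ σ, MeasurableSet (A σ) := fun σ => measurable_mono_set σ
  have step2 : ∀ σ : Equiv.Perm (Fin n), ∫ s in A σ, F s = ∫ s in M, F s := by
    intro σ
    set T := MeasurableEquiv.piCongrLeft (fun _ : Fin n => ℝ) σ with hT
    have hmp := MeasureTheory.volume_measurePreserving_piCongrLeft (fun _ : Fin n => ℝ) σ
    have hemb := T.measurableEmbedding
    have hTapp : ∀ (x : Fin n → ℝ) (i : Fin n), T x (σ i) = x i := by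
      intro x i
      rw [hT, MeasurableEquiv.coe_piCongrLeft]
      exact Equiv.piCongrLeft_apply_apply (fun _ => ℝ) σ x i
    have key := hmp.setIntegral_preimage_emb hemb F (A σ)
    have hpre : T ⁻¹' (A σ) = M := by
      ext x
      simp only [Set.mem_preimage, hA, hM, Set.mem_setOf_eq]
      constructor
      · intro h i j hij
        have := h i j hij
        rwa [hTapp, hTapp] at this
      · intro h i j hij
        rw [hTapp, hTapp]; exact h i j hij
    have hfun : ∀ x, F (T x) = F x := by
      intro x
      show (∏ i, g (T x i)) = ∏ i, g (x i)
      rw [← Equiv.prod_comp σ (fun i => g (T x i))]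
      simp only [hTapp]
    rw [hpre] at key
    rw [← key]
    exact setIntegral_congr_fun hMmeas (fun x _ => hfun x)
  have hinj : ∀ᵐ s : Fin n → ℝ, Function.Injective s := by
    rw [ae_iff]; exact null_noninj
  have cover : F =ᵐ[(volume : Measure (Fin n → ℝ))]
      fun s => ∑ σ : Equiv.Perm (Fin n), (A σ).indicator F s := by
    filter_upwards [hinj] with s hs
    rw [Finset.sum_eq_single_of_mem (Tuple.sort s) (Finset.mem_univ _)]
    · rw [Set.indicator_of_mem]
      intro i j hij
      exact Tuple.monotone_sort s hij
    · intro τ _ hτ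
      rw [Set.indicator_of_notMem]
      intro hmem
      have h1 : Monotone (s ∘ τ) := fun i j hij => hmem i j hij
      have h2 : Monotone (s ∘ Tuple.sort s) := Tuple.monotone_sort s
      have heq := Tuple.unique_monotone h1 h2
      apply hτ
      apply Equiv.ext
      intro i
      exact hs (congrFun heq i)
  have hsum : ∫ s : Fin n → ℝ, F s = ∑ σ : Equiv.Perm (Fin n), ∫ s in A σ, F s := by
    rw [integral_congr_ae cover,
      integral_finset_sum _ (fun σ _ => hFint.indicator (hAmeas σ))]
    exact Finset.sum_congr rfl fun σ _ => integral_indicator (hAmeas σ)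
  have htotal : ∫ s : Fin n → ℝ, F s = (∫ t in Set.Icc (0:ℝ) β, f t) ^ n := by
    rw [hF]
    beta_reduce
    rw [MeasureTheory.volume_pi, MeasureTheory.integral_fintype_prod_eq_pow (ι := Fin n) g, hg,
      integral_indicator measurableSet_Icc]
    simp
  rw [step1]
  have hfact : (n.factorial : ℝ) * ∫ s in M, F s = (∫ t in Set.Icc (0:ℝ) β, f t) ^ n := by
    rw [← htotal, hsum, Finset.sum_congr rfl (fun σ _ => step2 σ), Finset.sum_const,
      Finset.card_univ, Fintype.card_perm, nsmul_eq_mul, Fintype.card_fin]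
  rw [eq_div_iff (by exact_mod_cast n.factorial_ne_zero)]
  linarith [hfact]

end Simplex

set_option linter.unusedSectionVars false
set_option maxHeartbeats 1000000
set_option synthInstance.maxHeartbeats 1000000

instance piLp_completeSpace_aux {H : Type*} [NormedAddCommGroup H] [CompleteSpace H]
    (ι' : Type*) [Fintype ι'] :
    CompleteSpace (PiLp 2 fun _ : ι' => H) :=
  inferInstance

instance piLp_t2Space_aux {H : Type*} [NormedAddCommGroup H] (ι' : Type*) [Fintype ι'] :
    T2Space (PiLp 2 fun _ : ι' => H) :=
  inferInstance

section Key

variable {H : Type*} [NormedAddCommGroup H] [InnerProductSpace ℂ H] [CompleteSpace H]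
  {ι : Type*} (e : HilbertBasis ι ℂ H) (Vs : ℝ → (H →L[ℂ] H)) (a b β : ℝ)

lemma simplexSet_measurable (n : ℕ) :
    MeasurableSet {s : Fin n → ℝ |
      (∀ i, s i ∈ Set.Icc 0 β) ∧ (∀ i j : Fin n, i ≤ j → s i ≤ s j)} := by
  have h1 : {s : Fin n → ℝ | (∀ i, s i ∈ Set.Icc 0 β) ∧ (∀ i j : Fin n, i ≤ j → s i ≤ s j)}
      = (Set.univ.pi fun _ => Set.Icc (0:ℝ) β) ∩
        {s : Fin n → ℝ | ∀ i j : Fin n, i ≤ j → s i ≤ s j} := by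
    ext s
    constructor
    · rintro ⟨hc, hm⟩; exact ⟨fun i _ => hc i, hm⟩
    · rintro ⟨hc, hm⟩; exact ⟨fun i => hc i (Set.mem_univ i), hm⟩
  rw [h1]
  exact (MeasurableSet.univ_pi fun _ => measurableSet_Icc).inter
    (by simpa only [Equiv.refl_apply] using measurable_mono_set (Equiv.refl (Fin n)))

lemma simplexSet_isCompact (n : ℕ) :
    IsCompact {s : Fin n → ℝ |
      (∀ i, s i ∈ Set.Icc 0 β) ∧ (∀ i j : Fin n, i ≤ j → s i ≤ s j)} := by
  have hclosed : IsClosed {s : Fin n → ℝ |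
      (∀ i, s i ∈ Set.Icc 0 β) ∧ (∀ i j : Fin n, i ≤ j → s i ≤ s j)} := by
    have h1 : {s : Fin n → ℝ | (∀ i, s i ∈ Set.Icc 0 β) ∧ (∀ i j : Fin n, i ≤ j → s i ≤ s j)}
        = (⋂ i, {s : Fin n → ℝ | s i ∈ Set.Icc 0 β}) ∩
          ⋂ (i : Fin n) (j : Fin n) (_ : i ≤ j), {s : Fin n → ℝ | s i ≤ s j} := by
      ext s
      simp only [Set.mem_inter_iff, Set.mem_iInter, Set.mem_setOf_eq]
    rw [h1]
    refine IsClosed.inter (isClosed_iInter fun i => ?_)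
      (isClosed_iInter fun i => isClosed_iInter fun j => isClosed_iInter fun _ =>
        isClosed_le (continuous_apply i) (continuous_apply j))
    exact IsClosed.preimage (continuous_apply i) isClosed_Icc
  refine (isCompact_univ_pi fun _ : Fin n => isCompact_Icc (a := (0:ℝ)) (b := β)).of_isClosed_subset
    hclosed ?_
  intro s hs
  exact fun i _ => hs.1 i

lemma dyson_integrand_continuous (hVs_cont : Continuous Vs) (n : ℕ) :
    Continuous fun s : Fin n → ℝ => (List.ofFn fun i => Vs (s i)).prod := by
  have h : (fun s : Fin n → ℝ => (List.ofFn fun i => Vs (s i)).prod)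
      = fun s => ((List.finRange n).map fun i => Vs (s i)).prod := by
    funext s
    rw [List.ofFn_eq_map]
  rw [h]
  exact continuous_list_prod (List.finRange n) fun i _ =>
    hVs_cont.comp (continuous_apply i)

lemma dyson_integrableOn (hVs_cont : Continuous Vs) (n : ℕ) :
    IntegrableOn (fun s : Fin n → ℝ => (List.ofFn fun i => Vs (s i)).prod)
      {s : Fin n → ℝ | (∀ i, s i ∈ Set.Icc 0 β) ∧ (∀ i j : Fin n, i ≤ j → s i ≤ s j)} :=
  ((dyson_integrand_continuous Vs hVs_cont n).continuousOn).integrableOn_compact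
    (simplexSet_isCompact β n)

lemma icc_integral_exp (hb : 0 < b) (hβ : 0 < β) :
    ∫ t in Set.Icc (0:ℝ) β, (a * Real.exp (b * t)) = a * (Real.exp (b * β) - 1) / b := by
  rw [MeasureTheory.integral_Icc_eq_integral_Ioc, ← intervalIntegral.integral_of_le hβ.le,
    intervalIntegral.integral_const_mul, intervalIntegral.integral_comp_mul_left Real.exp hb.ne']
  rw [mul_zero, integral_exp, Real.exp_zero, smul_eq_mul]
  field_simp

lemma dyson_phi_bound (hVs_cont : Continuous Vs) (ha : 0 ≤ a) (hb : 0 < b) (hβ : 0 < β)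
    (hHS : ∀ s ∈ Set.Icc (0 : ℝ) β, Summable fun i : ι => ‖Vs s (e i)‖ ^ 2)
    (hbound : ∀ s ∈ Set.Icc (0 : ℝ) β, hsNorm e (Vs s) ≤ a * Real.exp (b * s))
    (n : ℕ) (F : Finset ι) :
    ‖phiF e F (dysonTerm Vs β (n + 1))‖ ≤
      (a * (Real.exp (b * β) - 1) / b) ^ (n + 1) / (n + 1).factorial := by
  set S : Set (Fin (n+1) → ℝ) :=
    {s | (∀ i, s i ∈ Set.Icc 0 β) ∧ (∀ i j : Fin (n+1), i ≤ j → s i ≤ s j)} with hSdef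
  set f : (Fin (n+1) → ℝ) → (H →L[ℂ] H) :=
    fun s => (List.ofFn fun i => Vs (s i)).prod with hfdef
  have hfint : IntegrableOn f S := dyson_integrableOn Vs β hVs_cont (n+1)
  have hcomm : phiF e F (dysonTerm Vs β (n + 1)) = ∫ s in S, phiF e F (f s) :=
    (ContinuousLinearMap.integral_comp_comm (phiF e F) hfint).symm
  have hptwise : ∀ s ∈ S, ‖phiF e F (f s)‖ ≤ ∏ i : Fin (n+1), (a * Real.exp (b * s i)) := by
    intro s hs
    have hmem : ∀ i : Fin (n+1), s i ∈ Set.Icc (0:ℝ) β := hs.1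
    have hWs : Summable fun i : ι => ‖Vs (s (Fin.last n)) (e i)‖ ^ 2 :=
      hHS _ (hmem (Fin.last n))
    calc ‖phiF e F (f s)‖
        ≤ (∏ i : Fin n, ‖Vs (s i.castSucc)‖) * hsNorm e (Vs (s (Fin.last n))) :=
          key_pointwise e F (fun i => Vs (s i)) hWs
      _ ≤ (∏ i : Fin n, (a * Real.exp (b * s i.castSucc))) *
            (a * Real.exp (b * s (Fin.last n))) := by
          apply mul_le_mul
          · apply Finset.prod_le_prod (fun i _ => norm_nonneg _) (fun i _ => ?_)
            exact (opNorm_le_hsNorm e (hHS _ (hmem i.castSucc))).trans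
              (hbound _ (hmem i.castSucc))
          · exact hbound _ (hmem (Fin.last n))
          · exact hsNorm_nonneg _ _
          · exact Finset.prod_nonneg fun i _ => by positivity
      _ = ∏ i : Fin (n+1), (a * Real.exp (b * s i)) :=
          (Fin.prod_univ_castSucc fun i : Fin (n+1) => a * Real.exp (b * s i)).symm
  have hbd_cont : Continuous fun s : Fin (n+1) → ℝ =>
      ∏ i : Fin (n+1), (a * Real.exp (b * s i)) := by
    apply continuous_finset_prod
    intro i _
    exact continuous_const.mul ((Real.continuous_exp).comp
      (continuous_const.mul (continuous_apply i)))
  calc ‖phiF e F (dysonTerm Vs β (n + 1))‖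
      ≤ ∫ s in S, ‖phiF e F (f s)‖ := by
        rw [hcomm]
        exact norm_integral_le_integral_norm _
    _ ≤ ∫ s in S, ∏ i : Fin (n+1), (a * Real.exp (b * s i)) := by
        apply setIntegral_mono_on
        · exact (((phiF e F).continuous.comp
            (dyson_integrand_continuous Vs hVs_cont (n+1))).norm.continuousOn).integrableOn_compact
            (simplexSet_isCompact β (n+1))
        · exact (hbd_cont.continuousOn).integrableOn_compact (simplexSet_isCompact β (n+1))
        · exact simplexSet_measurable β (n+1)
        · exact hptwise
    _ = (a * (Real.exp (b * β) - 1) / b) ^ (n + 1) / (n + 1).factorial := by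
        rw [simplex_integral (fun t => a * Real.exp (b * t))
          (continuous_const.mul ((Real.continuous_exp).comp (continuous_const.mul continuous_id)))
          β (n+1), icc_integral_exp a b β hb hβ]

lemma dyson_C_nonneg (ha : 0 ≤ a) (hb : 0 < b) (hβ : 0 < β) :
    0 ≤ a * (Real.exp (b * β) - 1) / b := by
  have h1 : (1:ℝ) ≤ Real.exp (b * β) := by
    rw [← Real.exp_zero]
    exact Real.exp_le_exp.2 (by positivity)
  exact div_nonneg (mul_nonneg ha (by linarith)) hb.le

lemma dyson_hs_summable_and_bound (hVs_cont : Continuous Vs) (ha : 0 ≤ a) (hb : 0 < b)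
    (hβ : 0 < β)
    (hHS : ∀ s ∈ Set.Icc (0 : ℝ) β, Summable fun i : ι => ‖Vs s (e i)‖ ^ 2)
    (hbound : ∀ s ∈ Set.Icc (0 : ℝ) β, hsNorm e (Vs s) ≤ a * Real.exp (b * s))
    (n : ℕ) :
    (Summable fun i : ι => ‖dysonTerm Vs β (n + 1) (e i)‖ ^ 2) ∧
      hsNorm e (dysonTerm Vs β (n + 1)) ≤
        (a * (Real.exp (b * β) - 1) / b) ^ (n + 1) / (n + 1).factorial := by
  set B : ℝ := (a * (Real.exp (b * β) - 1) / b) ^ (n + 1) / (n + 1).factorial with hB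
  have hBnn : 0 ≤ B := by
    have hCnn := dyson_C_nonneg a b β ha hb hβ
    rw [hB]
    exact div_nonneg (pow_nonneg hCnn _) (Nat.cast_nonneg _)
  have hpart : ∀ F : Finset ι, ∑ i ∈ F, ‖dysonTerm Vs β (n + 1) (e i)‖ ^ 2 ≤ B ^ 2 := by
    intro F
    have h1 := dyson_phi_bound e Vs a b β hVs_cont ha hb hβ hHS hbound n F
    rw [phiF_norm] at h1
    calc ∑ i ∈ F, ‖dysonTerm Vs β (n + 1) (e i)‖ ^ 2
        = Real.sqrt (∑ i ∈ F, ‖dysonTerm Vs β (n + 1) (e i)‖ ^ 2) ^ 2 :=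
          (Real.sq_sqrt (Finset.sum_nonneg fun i _ => sq_nonneg _)).symm
      _ ≤ B ^ 2 := pow_le_pow_left₀ (Real.sqrt_nonneg _) h1 2
  have hsummable : Summable fun i : ι => ‖dysonTerm Vs β (n + 1) (e i)‖ ^ 2 :=
    summable_of_sum_le (fun i => sq_nonneg _) hpart
  refine ⟨hsummable, ?_⟩
  rw [hsNorm, show B = Real.sqrt (B ^ 2) from (Real.sqrt_sq hBnn).symm]
  exact Real.sqrt_le_sqrt (Summable.tsum_le_of_sum_le hsummable hpart)

end Key

/-- Suppose `V(s) = e^{-sH₀} V e^{sH₀}` satisfies `‖V(s)‖₂ ≤ a e^{bs}`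
for all `0 ≤ s ≤ β`. Then the Dyson series
`D(β) = ∑_{n≥1} ∫_0^β ds_1 ∫_0^{s_1} ds_2 ⋯ ∫_0^{s_{n-1}} ds_n V(s_n)⋯V(s_1)`
converges in Hilbert–Schmidt norm and satisfies
`‖D(β)‖₂ ≤ exp[a (e^{βb} − 1)/b] − 1`. -/
theorem dyson_series_hs_bound
    {H : Type*} [NormedAddCommGroup H] [InnerProductSpace ℂ H] [CompleteSpace H]
    {ι : Type*} (e : HilbertBasis ι ℂ H)
    (Vs : ℝ → (H →L[ℂ] H)) (hVs_cont : Continuous Vs)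
    (a b β : ℝ) (ha : 0 ≤ a) (hb : 0 < b) (hβ : 0 < β)
    (hHS : ∀ s ∈ Set.Icc (0 : ℝ) β, Summable fun i : ι => ‖Vs s (e i)‖ ^ 2)
    (hbound : ∀ s ∈ Set.Icc (0 : ℝ) β, hsNorm e (Vs s) ≤ a * Real.exp (b * s)) :
    Summable (fun n : ℕ => hsNorm e (dysonTerm Vs β (n + 1))) ∧
    Summable (fun n : ℕ => dysonTerm Vs β (n + 1)) ∧
    hsNorm e (∑' n : ℕ, dysonTerm Vs β (n + 1)) ≤
      Real.exp (a * (Real.exp (β * b) - 1) / b) - 1 := by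
  set C : ℝ := a * (Real.exp (b * β) - 1) / b with hC
  have hCnn : 0 ≤ C := dyson_C_nonneg a b β ha hb hβ
  set Bd : ℕ → ℝ := fun n => C ^ (n + 1) / (n + 1).factorial with hBd
  have hkey := dyson_hs_summable_and_bound e Vs a b β hVs_cont ha hb hβ hHS hbound
  have hBd_nonneg : ∀ n, 0 ≤ Bd n := fun n => by positivity
  have hBd_summable : Summable Bd :=
    (summable_nat_add_iff 1).2 (Real.summable_pow_div_factorial C)
  have hBd_tsum : ∑' n, Bd n = Real.exp C - 1 := by
    have h0 : Real.exp C = ∑' n : ℕ, C ^ n / n.factorial := by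
      rw [Real.exp_eq_exp_ℝ, NormedSpace.exp_eq_tsum_div]
    have h1 := Summable.tsum_eq_zero_add (Real.summable_pow_div_factorial C)
    rw [← h0] at h1
    simp only [pow_zero, Nat.factorial_zero, Nat.cast_one, div_one] at h1
    rw [hBd]
    linarith
  have conj1 : Summable (fun n : ℕ => hsNorm e (dysonTerm Vs β (n + 1))) :=
    Summable.of_nonneg_of_le (fun n => hsNorm_nonneg e _) (fun n => (hkey n).2) hBd_summable
  have conj2 : Summable (fun n : ℕ => dysonTerm Vs β (n + 1)) := by
    apply Summable.of_norm_bounded hBd_summable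
    intro n
    exact (opNorm_le_hsNorm e (hkey n).1).trans (hkey n).2
  refine ⟨conj1, conj2, ?_⟩
  set M : ℝ := Real.exp C - 1 with hM
  have hMnn : 0 ≤ M := by
    have : (1:ℝ) ≤ Real.exp C := by
      rw [← Real.exp_zero]; exact Real.exp_le_exp.2 hCnn
    linarith
  set D : H →L[ℂ] H := ∑' n : ℕ, dysonTerm Vs β (n + 1) with hD
  have hpart : ∀ F : Finset ι, ∑ i ∈ F, ‖D (e i)‖ ^ 2 ≤ M ^ 2 := by
    intro F
    have hphi : ‖phiF e F D‖ ≤ M := by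
      rw [hD, ContinuousLinearMap.map_tsum (phiF e F) conj2]
      have hsum_norm : Summable fun n : ℕ => ‖phiF e F (dysonTerm Vs β (n + 1))‖ :=
        Summable.of_nonneg_of_le (fun n => norm_nonneg _)
          (fun n => (phiF_le_hsNorm e F (hkey n).1).trans (hkey n).2) hBd_summable
      calc ‖∑' n : ℕ, phiF e F (dysonTerm Vs β (n + 1))‖
          ≤ ∑' n : ℕ, ‖phiF e F (dysonTerm Vs β (n + 1))‖ := norm_tsum_le_tsum_norm hsum_norm
        _ ≤ ∑' n : ℕ, Bd n := Summable.tsum_le_tsum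
            (fun n => (phiF_le_hsNorm e F (hkey n).1).trans (hkey n).2) hsum_norm hBd_summable
        _ = M := hBd_tsum
    rw [phiF_norm] at hphi
    calc ∑ i ∈ F, ‖D (e i)‖ ^ 2
        = Real.sqrt (∑ i ∈ F, ‖D (e i)‖ ^ 2) ^ 2 :=
          (Real.sq_sqrt (Finset.sum_nonneg fun i _ => sq_nonneg _)).symm
      _ ≤ M ^ 2 := pow_le_pow_left₀ (Real.sqrt_nonneg _) hphi 2
  have hsummable : Summable fun i : ι => ‖D (e i)‖ ^ 2 :=
    summable_of_sum_le (fun i => sq_nonneg _) hpart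
  have hfinal : hsNorm e D ≤ M := by
    rw [hsNorm, show M = Real.sqrt (M ^ 2) from (Real.sqrt_sq hMnn).symm]
    exact Real.sqrt_le_sqrt (Summable.tsum_le_of_sum_le hsummable hpart)
  have : Real.exp (a * (Real.exp (β * b) - 1) / b) - 1 = M := by
    rw [hM, hC, mul_comm β b]
  rw [this]
  exact hfinal
end

section
/- For the truncated oscillator-bath interaction V = χ_{H_0≤Ω} (Σ_{j=1}^N g_j a† b_j + h.c.) χ_{H_0≤Ω}, with H_0 = ω_0 a†a + Σ_j ω_j b_j† b_j, the bound ‖e^{-sH_0} V e^{sH_0}‖₂ ≤ 2 ‖g‖₂ √N (Ω/ω_min + 1)^{(N+3)/2} e^{|s| Δω} holds for all real s, where ω_min = min_{0≤j≤N} ω_j, Δω = max_{1≤j≤N} |ω_0 − ω_j|, and ‖g‖₂ = (Σ_j |g_j|²)^{1/2}. -/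
open scoped Classical

local notation "⟪" x ", " y "⟫" => @inner ℂ _ _ x y

lemma hb_parseval {H : Type*} [NormedAddCommGroup H] [InnerProductSpace ℂ H] [CompleteSpace H]
    {ι : Type*} (e : HilbertBasis ι ℂ H) (x : H) :
    HasSum (fun i => ‖⟪e i, x⟫‖ ^ 2) (‖x‖ ^ 2) := by
  have h := e.hasSum_inner_mul_inner x x
  rw [inner_self_eq_norm_sq_to_K] at h
  rw [← Complex.hasSum_ofReal]
  convert h using 2 with i
  · norm_cast
  · rw [← inner_conj_symm x (e i), Complex.conj_mul']
    push_cast; ring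
  · norm_cast


/-- For the truncated oscillator-bath interaction
`V = χ_{H₀≤Ω} (∑_{j=1}^N g_j a† b_j + h.c.) χ_{H₀≤Ω}` with
`H₀ = ω_0 a†a + ∑_j ω_j b_j† b_j`, the bound
`‖e^{-sH₀} V e^{sH₀}‖₂ ≤ 2 ‖g‖₂ √N (Ω/ω_min + 1)^{(N+3)/2} e^{|s| Δω}`
holds for all real `s`, where `ω_min = min_{0≤j≤N} ω_j`,
`Δω = max_{1≤j≤N} |ω_0 − ω_j|` and `‖g‖₂ = (∑_j |g_j|²)^{1/2}`.
The Fock space of the `N+1` oscillators is realized as a Hilbert space `H` with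
orthonormal basis `(|m⟩)` indexed by occupation numbers `m : Fin (N+1) → ℕ`
(oscillator `a` has index `0` and bath oscillator `b_j` has index `j`); the operators
`V` and `W(s) = e^{-sH₀} V e^{sH₀}` are specified through their matrix elements. -/
theorem oscillator_bath_truncated_hs_bound
    {H : Type*} [NormedAddCommGroup H] [InnerProductSpace ℂ H] [CompleteSpace H]
    (N : ℕ) (hN : 0 < N)
    (e : HilbertBasis (Fin (N + 1) → ℕ) ℂ H)
    (ω : Fin (N + 1) → ℝ) (hω : ∀ j, 0 < ω j)
    (g : Fin N → ℂ) (Ω : ℝ) (hΩ : 0 < Ω) (s : ℝ)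
    -- the energies `E(m) = ∑_j ω_j m_j` of the eigenstates of `H₀`:
    (E : (Fin (N + 1) → ℕ) → ℝ) (hE : ∀ m, E m = ∑ j, ω j * (m j : ℝ))
    -- `up j m` / `down j m`: states obtained from `m` by the action of `a† b_j` / `a b_j†`:
    (up down : Fin N → (Fin (N + 1) → ℕ) → (Fin (N + 1) → ℕ))
    (hup : ∀ j m, up j m =
      Function.update (Function.update m 0 (m 0 + 1)) j.succ (m j.succ - 1))
    (hdown : ∀ j m, down j m =
      Function.update (Function.update m 0 (m 0 - 1)) j.succ (m j.succ + 1))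
    -- the truncated interaction `V = χ_{H₀≤Ω} (∑_j g_j a† b_j + h.c.) χ_{H₀≤Ω}`:
    (V : H →L[ℂ] H)
    (hV : ∀ n m : Fin (N + 1) → ℕ, ⟪e n, V (e m)⟫ =
      if E n ≤ Ω ∧ E m ≤ Ω then
        ∑ j : Fin N,
          ((g j) * (Real.sqrt (((m 0 : ℝ) + 1) * (m j.succ : ℝ)) : ℂ) *
              (if n = up j m then 1 else 0) +
            (starRingEnd ℂ (g j)) * (Real.sqrt ((m 0 : ℝ) * ((m j.succ : ℝ) + 1)) : ℂ) *
              (if n = down j m then 1 else 0))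
      else 0)
    -- `W = e^{-sH₀} V e^{sH₀}`:
    (W : H →L[ℂ] H)
    (hW : ∀ n m : Fin (N + 1) → ℕ,
      ⟪e n, W (e m)⟫ = (Real.exp (-s * (E n - E m)) : ℂ) * ⟪e n, V (e m)⟫) :
    hsNorm e W ≤
      2 * Real.sqrt (∑ j : Fin N, ‖g j‖ ^ 2) * Real.sqrt N *
        (Ω / (⨅ j, ω j) + 1) ^ (((N : ℝ) + 3) / 2) *
        Real.exp (|s| * (⨆ j : Fin N, |ω 0 - ω j.succ|)) := by
  classical
  have hNe : Nonempty (Fin N) := ⟨⟨0, hN⟩⟩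
  set ωmin : ℝ := ⨅ j, ω j with hωmin
  set Δ : ℝ := ⨆ j : Fin N, |ω 0 - ω j.succ| with hΔdef
  set K : ℝ := Ω / ωmin with hKdef
  set G : ℝ := ∑ j : Fin N, ‖g j‖ ^ 2 with hGdef
  -- basic positivity facts
  have hωmin_pos : 0 < ωmin := by
    obtain ⟨j0, hj0⟩ := Finite.exists_min ω
    exact lt_of_lt_of_le (hω j0) (le_ciInf hj0)
  have hK_pos : 0 < K := div_pos hΩ hωmin_pos
  have hΔ_le : ∀ j : Fin N, |ω 0 - ω j.succ| ≤ Δ :=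
    fun j => le_ciSup (f := fun j : Fin N => |ω 0 - ω j.succ|) (Set.Finite.bddAbove (Set.finite_range _)) j
  have hΔ_nonneg : 0 ≤ Δ := le_trans (abs_nonneg _) (hΔ_le ⟨0, hN⟩)
  have hG_nonneg : 0 ≤ G := Finset.sum_nonneg fun j _ => sq_nonneg _
  -- occupation number bound
  have hmK : ∀ m : Fin (N + 1) → ℕ, E m ≤ Ω → ∀ j, (m j : ℝ) ≤ K := by
    intro m hm j
    have h1 : ω j * (m j : ℝ) ≤ E m := by
      rw [hE]
      exact Finset.single_le_sum (f := fun i => ω i * (m i : ℝ))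
        (fun i _ => mul_nonneg (hω i).le (Nat.cast_nonneg _)) (Finset.mem_univ j)
    have h3 : (m j : ℝ) ≤ Ω / ω j := by
      rw [le_div_iff₀ (hω j)]
      calc (m j : ℝ) * ω j = ω j * (m j : ℝ) := by ring
        _ ≤ Ω := h1.trans hm
    refine h3.trans ?_
    exact div_le_div_of_nonneg_left hΩ.le hωmin_pos
      (ciInf_le (Set.Finite.bddBelow (Set.finite_range _)) j)
  -- energy shifts
  have hEup : ∀ (j : Fin N) (m : Fin (N + 1) → ℕ), 1 ≤ m j.succ →
      E (up j m) - E m = ω 0 - ω j.succ := by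
    intro j m hj
    have h0 : (0 : Fin (N + 1)) ≠ j.succ := (Fin.succ_ne_zero j).symm
    rw [hE, hE, ← Finset.sum_sub_distrib]
    have hsum : ∀ k : Fin (N + 1),
        ω k * ((up j m) k : ℝ) - ω k * (m k : ℝ) = ω k * (((up j m) k : ℝ) - m k) :=
      fun k => by ring
    calc ∑ k, (ω k * ((up j m) k : ℝ) - ω k * (m k : ℝ))
        = ∑ k ∈ ({0, j.succ} : Finset (Fin (N + 1))), (ω k * ((up j m) k : ℝ) - ω k * (m k : ℝ)) := by
          refine (Finset.sum_subset (Finset.subset_univ _) ?_).symm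
          intro k _ hk
          simp only [Finset.mem_insert, Finset.mem_singleton, not_or] at hk
          have : (up j m) k = m k := by
            rw [hup]
            rw [Function.update_of_ne hk.2, Function.update_of_ne hk.1]
          rw [this]; ring
      _ = ω 0 - ω j.succ := by
          rw [Finset.sum_pair h0]
          have hu0 : (up j m) 0 = m 0 + 1 := by
            rw [hup, Function.update_of_ne h0, Function.update_self]
          have hus : (up j m) j.succ = m j.succ - 1 := by
            rw [hup, Function.update_self]
          rw [hu0, hus]
          have : ((m j.succ - 1 : ℕ) : ℝ) = (m j.succ : ℝ) - 1 := by
            rw [Nat.cast_sub hj]; norm_num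
          rw [this]
          push_cast
          ring
  have hEdown : ∀ (j : Fin N) (m : Fin (N + 1) → ℕ), 1 ≤ m 0 →
      E (down j m) - E m = ω j.succ - ω 0 := by
    intro j m hj
    have h0 : (0 : Fin (N + 1)) ≠ j.succ := (Fin.succ_ne_zero j).symm
    rw [hE, hE, ← Finset.sum_sub_distrib]
    calc ∑ k, (ω k * ((down j m) k : ℝ) - ω k * (m k : ℝ))
        = ∑ k ∈ ({0, j.succ} : Finset (Fin (N + 1))), (ω k * ((down j m) k : ℝ) - ω k * (m k : ℝ)) := by
          refine (Finset.sum_subset (Finset.subset_univ _) ?_).symm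
          intro k _ hk
          simp only [Finset.mem_insert, Finset.mem_singleton, not_or] at hk
          have : (down j m) k = m k := by
            rw [hdown]
            rw [Function.update_of_ne hk.2, Function.update_of_ne hk.1]
          rw [this]; ring
      _ = ω j.succ - ω 0 := by
          rw [Finset.sum_pair h0]
          have hu0 : (down j m) 0 = m 0 - 1 := by
            rw [hdown, Function.update_of_ne h0, Function.update_self]
          have hus : (down j m) j.succ = m j.succ + 1 := by
            rw [hdown, Function.update_self]
          rw [hu0, hus]
          have : ((m 0 - 1 : ℕ) : ℝ) = (m 0 : ℝ) - 1 := by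
            rw [Nat.cast_sub hj]; norm_num
          rw [this]
          push_cast
          ring
  -- the uniform matrix-element bound
  set A : ℝ := Real.exp (|s| * Δ) * (K + 1) with hAdef
  have hK1 : (0:ℝ) ≤ K + 1 := by linarith
  have hA_nonneg : 0 ≤ A := mul_nonneg (Real.exp_pos _).le hK1
  have key : ∀ m n : Fin (N + 1) → ℕ, ‖⟪e n, W (e m)⟫‖ ≤
      A * ∑ j : Fin N, ‖g j‖ *
        ((if n = up j m then (1:ℝ) else 0) + (if n = down j m then (1:ℝ) else 0)) := by
    intro m n
    have hχ : ∀ (P : Prop) [Decidable P], (0:ℝ) ≤ if P then (1:ℝ) else 0 := by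
      intro P _; split <;> norm_num
    have hS_nonneg : 0 ≤ ∑ j : Fin N, ‖g j‖ *
        ((if n = up j m then (1:ℝ) else 0) + (if n = down j m then (1:ℝ) else 0)) :=
      Finset.sum_nonneg fun j _ =>
        mul_nonneg (norm_nonneg _) (add_nonneg (hχ _) (hχ _))
    rw [hW, hV]
    by_cases hcond : E n ≤ Ω ∧ E m ≤ Ω
    swap
    · rw [if_neg hcond, mul_zero, norm_zero]
      exact mul_nonneg hA_nonneg hS_nonneg
    rw [if_pos hcond]
    by_cases hv : (∑ j : Fin N,
          ((g j) * (Real.sqrt (((m 0 : ℝ) + 1) * (m j.succ : ℝ)) : ℂ) *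
              (if n = up j m then 1 else 0) +
            (starRingEnd ℂ (g j)) * (Real.sqrt ((m 0 : ℝ) * ((m j.succ : ℝ) + 1)) : ℂ) *
              (if n = down j m then 1 else 0))) = 0
    · rw [hv, mul_zero, norm_zero]
      exact mul_nonneg hA_nonneg hS_nonneg
    -- some term is nonzero, giving the energy-difference bound
    have hEnm : |E n - E m| ≤ Δ := by
      obtain ⟨j, -, hj⟩ := Finset.exists_ne_zero_of_sum_ne_zero hv
      have hcases : (g j) * (Real.sqrt (((m 0 : ℝ) + 1) * (m j.succ : ℝ)) : ℂ) *
              (if n = up j m then 1 else 0) ≠ 0 ∨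
          (starRingEnd ℂ (g j)) * (Real.sqrt ((m 0 : ℝ) * ((m j.succ : ℝ) + 1)) : ℂ) *
              (if n = down j m then 1 else 0) ≠ 0 := by
        by_contra hc
        push_neg at hc
        rw [hc.1, hc.2, add_zero] at hj
        exact hj rfl
      rcases hcases with ht | ht
      · have hnup : n = up j m := by
          by_contra hne
          rw [if_neg hne, mul_zero] at ht
          exact ht rfl
        have hsqrt : Real.sqrt (((m 0 : ℝ) + 1) * (m j.succ : ℝ)) ≠ 0 := by
          intro h
          rw [h] at ht
          simp at ht
        have hpos : 0 < ((m 0 : ℝ) + 1) * (m j.succ : ℝ) := by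
          rcases (Real.sqrt_eq_zero' (x := ((m 0 : ℝ) + 1) * (m j.succ : ℝ))).not.1 hsqrt
            with h
          push_neg at h
          exact h
        have hmj : 1 ≤ m j.succ := by
          by_contra h
          push_neg at h
          interval_cases hmj : m j.succ
          · simp at hpos
        have := hEup j m hmj
        rw [hnup, this]
        exact hΔ_le j
      · have hndown : n = down j m := by
          by_contra hne
          rw [if_neg hne, mul_zero] at ht
          exact ht rfl
        have hsqrt : Real.sqrt ((m 0 : ℝ) * ((m j.succ : ℝ) + 1)) ≠ 0 := by
          intro h
          rw [h] at ht
          simp at ht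
        have hpos : 0 < (m 0 : ℝ) * ((m j.succ : ℝ) + 1) := by
          rcases (Real.sqrt_eq_zero' (x := (m 0 : ℝ) * ((m j.succ : ℝ) + 1))).not.1 hsqrt
            with h
          push_neg at h
          exact h
        have hm0 : 1 ≤ m 0 := by
          by_contra h
          push_neg at h
          interval_cases hm0 : m 0
          · simp at hpos
        have := hEdown j m hm0
        rw [hndown, this, abs_sub_comm]
        exact hΔ_le j
    have hexp : Real.exp (-s * (E n - E m)) ≤ Real.exp (|s| * Δ) := by
      apply Real.exp_le_exp.2
      calc -s * (E n - E m) ≤ |(-s) * (E n - E m)| := le_abs_self _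
        _ = |s| * |E n - E m| := by rw [abs_mul, abs_neg]
        _ ≤ |s| * Δ := mul_le_mul_of_nonneg_left hEnm (abs_nonneg s)
    -- norm of the sum bound
    have hvb : ‖(∑ j : Fin N,
          ((g j) * (Real.sqrt (((m 0 : ℝ) + 1) * (m j.succ : ℝ)) : ℂ) *
              (if n = up j m then 1 else 0) +
            (starRingEnd ℂ (g j)) * (Real.sqrt ((m 0 : ℝ) * ((m j.succ : ℝ) + 1)) : ℂ) *
              (if n = down j m then 1 else 0)))‖ ≤
        (K + 1) * ∑ j : Fin N, ‖g j‖ *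
          ((if n = up j m then (1:ℝ) else 0) + (if n = down j m then (1:ℝ) else 0)) := by
      rw [Finset.mul_sum]
      refine (norm_sum_le _ _).trans (Finset.sum_le_sum fun j _ => ?_)
      have hm0K : (m 0 : ℝ) ≤ K := hmK m hcond.2 0
      have hmjK : (m j.succ : ℝ) ≤ K := hmK m hcond.2 j.succ
      have hsq1 : Real.sqrt (((m 0 : ℝ) + 1) * (m j.succ : ℝ)) ≤ K + 1 := by
        rw [show ((K:ℝ)+1) = Real.sqrt ((K+1)^2) from (Real.sqrt_sq hK1).symm]
        apply Real.sqrt_le_sqrt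
        rw [sq]
        apply mul_le_mul (by linarith) (by linarith) (Nat.cast_nonneg _) hK1
      have hsq2 : Real.sqrt ((m 0 : ℝ) * ((m j.succ : ℝ) + 1)) ≤ K + 1 := by
        rw [show ((K:ℝ)+1) = Real.sqrt ((K+1)^2) from (Real.sqrt_sq hK1).symm]
        apply Real.sqrt_le_sqrt
        rw [sq]
        apply mul_le_mul (by linarith) (by linarith) (by positivity) hK1
      have hn1 : ‖(g j) * (Real.sqrt (((m 0 : ℝ) + 1) * (m j.succ : ℝ)) : ℂ) *
          (if n = up j m then (1:ℂ) else 0)‖ ≤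
          ‖g j‖ * (K + 1) * (if n = up j m then (1:ℝ) else 0) := by
        rw [norm_mul, norm_mul, Complex.norm_real, Real.norm_eq_abs,
          abs_of_nonneg (Real.sqrt_nonneg _), apply_ite norm, norm_one, norm_zero]
        exact mul_le_mul_of_nonneg_right
          (mul_le_mul_of_nonneg_left hsq1 (norm_nonneg _)) (hχ _)
      have hn2 : ‖(starRingEnd ℂ (g j)) * (Real.sqrt ((m 0 : ℝ) * ((m j.succ : ℝ) + 1)) : ℂ) *
          (if n = down j m then (1:ℂ) else 0)‖ ≤
          ‖g j‖ * (K + 1) * (if n = down j m then (1:ℝ) else 0) := by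
        rw [norm_mul, norm_mul, RCLike.norm_conj, Complex.norm_real, Real.norm_eq_abs,
          abs_of_nonneg (Real.sqrt_nonneg _), apply_ite norm, norm_one, norm_zero]
        exact mul_le_mul_of_nonneg_right
          (mul_le_mul_of_nonneg_left hsq2 (norm_nonneg _)) (hχ _)
      calc ‖_ + _‖ ≤ _ := norm_add_le _ _
        _ ≤ ‖g j‖ * (K + 1) * (if n = up j m then (1:ℝ) else 0) +
            ‖g j‖ * (K + 1) * (if n = down j m then (1:ℝ) else 0) := add_le_add hn1 hn2
        _ = (K + 1) * (‖g j‖ *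
            ((if n = up j m then (1:ℝ) else 0) + (if n = down j m then (1:ℝ) else 0))) := by
          ring
    rw [norm_mul, Complex.norm_real, Real.norm_eq_abs, Real.abs_exp]
    calc Real.exp (-s * (E n - E m)) * ‖_‖ ≤ Real.exp (|s| * Δ) * ((K + 1) * _) :=
        mul_le_mul hexp hvb (norm_nonneg _) (Real.exp_pos _).le
      _ = A * _ := by rw [hAdef]; ring
  -- finite support in n
  set T : (Fin (N + 1) → ℕ) → Finset (Fin (N + 1) → ℕ) := fun m =>
    (Finset.image (fun j => up j m) Finset.univ) ∪
      (Finset.image (fun j => down j m) Finset.univ) with hTdef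
  have hsupp : ∀ m n, n ∉ T m → ⟪e n, W (e m)⟫ = 0 := by
    intro m n hn
    have h1 : ∀ j : Fin N, n ≠ up j m := by
      intro j h
      exact hn (Finset.mem_union_left _ (h ▸ Finset.mem_image_of_mem _ (Finset.mem_univ j)))
    have h2 : ∀ j : Fin N, n ≠ down j m := by
      intro j h
      exact hn (Finset.mem_union_right _ (h ▸ Finset.mem_image_of_mem _ (Finset.mem_univ j)))
    rw [hW, hV]
    split_ifs with h
    · rw [Finset.sum_eq_zero fun j _ => by rw [if_neg (h1 j), if_neg (h2 j)]; ring, mul_zero]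
    · rw [mul_zero]
  have hnorm2 : ∀ m, ‖W (e m)‖ ^ 2 = ∑ n ∈ T m, ‖⟪e n, W (e m)⟫‖ ^ 2 := by
    intro m
    rw [← (hb_parseval e (W (e m))).tsum_eq]
    exact tsum_eq_sum fun n hn => by rw [hsupp m n hn]; simp
  -- the per-column bound
  have hBm : ∀ m, ‖W (e m)‖ ^ 2 ≤ A ^ 2 * (G * (4 * N)) := by
    intro m
    rw [hnorm2 m]
    have step1 : ∑ n ∈ T m, ‖⟪e n, W (e m)⟫‖ ^ 2 ≤
        A ^ 2 * ∑ n ∈ T m, (∑ j : Fin N, ‖g j‖ *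
          ((if n = up j m then (1:ℝ) else 0) + (if n = down j m then (1:ℝ) else 0))) ^ 2 := by
      rw [Finset.mul_sum]
      refine Finset.sum_le_sum fun n _ => ?_
      rw [← mul_pow]
      exact pow_le_pow_left₀ (norm_nonneg _) (key m n) 2
    refine step1.trans (mul_le_mul_of_nonneg_left ?_ (sq_nonneg A))
    have step2 : ∀ n, (∑ j : Fin N, ‖g j‖ *
          ((if n = up j m then (1:ℝ) else 0) + (if n = down j m then (1:ℝ) else 0))) ^ 2 ≤
        G * ∑ j : Fin N,
          ((if n = up j m then (1:ℝ) else 0) + (if n = down j m then (1:ℝ) else 0)) ^ 2 := by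
      intro n
      exact Finset.sum_mul_sq_le_sq_mul_sq Finset.univ (fun j => ‖g j‖)
        (fun j => (if n = up j m then (1:ℝ) else 0) + (if n = down j m then (1:ℝ) else 0))
    calc ∑ n ∈ T m, (∑ j : Fin N, ‖g j‖ *
          ((if n = up j m then (1:ℝ) else 0) + (if n = down j m then (1:ℝ) else 0))) ^ 2
        ≤ ∑ n ∈ T m, G * ∑ j : Fin N,
            ((if n = up j m then (1:ℝ) else 0) + (if n = down j m then (1:ℝ) else 0)) ^ 2 :=
          Finset.sum_le_sum fun n _ => step2 n
      _ = G * ∑ n ∈ T m, ∑ j : Fin N,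
            ((if n = up j m then (1:ℝ) else 0) + (if n = down j m then (1:ℝ) else 0)) ^ 2 := by
          rw [Finset.mul_sum]
      _ ≤ G * (4 * N) := by
          refine mul_le_mul_of_nonneg_left ?_ hG_nonneg
          calc ∑ n ∈ T m, ∑ j : Fin N,
                ((if n = up j m then (1:ℝ) else 0) + (if n = down j m then (1:ℝ) else 0)) ^ 2
              ≤ ∑ n ∈ T m, ∑ j : Fin N,
                (2 * ((if n = up j m then (1:ℝ) else 0) + (if n = down j m then (1:ℝ) else 0))) :=
                Finset.sum_le_sum fun n _ => Finset.sum_le_sum fun j _ => by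
                  split_ifs <;> norm_num
            _ = ∑ j : Fin N, 2 * ((∑ n ∈ T m, (if n = up j m then (1:ℝ) else 0)) +
                  (∑ n ∈ T m, (if n = down j m then (1:ℝ) else 0))) := by
                rw [Finset.sum_comm]
                refine Finset.sum_congr rfl fun j _ => ?_
                rw [← Finset.sum_add_distrib, ← Finset.mul_sum]
            _ ≤ ∑ j : Fin N, 2 * (1 + 1) := by
                refine Finset.sum_le_sum fun j _ => ?_
                refine mul_le_mul_of_nonneg_left (add_le_add ?_ ?_) (by norm_num)
                · rw [Finset.sum_ite_eq' (T m) (up j m) (fun _ => (1:ℝ))]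
                  split <;> norm_num
                · rw [Finset.sum_ite_eq' (T m) (down j m) (fun _ => (1:ℝ))]
                  split <;> norm_num
            _ = 4 * N := by
                rw [Finset.sum_const, Finset.card_univ, Fintype.card_fin, nsmul_eq_mul]
                ring
  -- the finite set of relevant columns
  set F : Finset (Fin (N + 1) → ℕ) :=
    Fintype.piFinset (fun _ : Fin (N + 1) => Finset.range (⌊K⌋₊ + 1)) with hFdef
  have hmemF : ∀ m, E m ≤ Ω → m ∈ F := by
    intro m hm
    rw [hFdef, Fintype.mem_piFinset]
    intro j
    rw [Finset.mem_range, Nat.lt_succ_iff]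
    exact Nat.le_floor (hmK m hm j)
  have hzeroF : ∀ m ∉ F, ‖W (e m)‖ ^ 2 = 0 := by
    intro m hm
    have hEm : ¬E m ≤ Ω := fun h => hm (hmemF m h)
    rw [hnorm2 m]
    refine Finset.sum_eq_zero fun n _ => ?_
    rw [hW, hV, if_neg fun h => hEm h.2, mul_zero, norm_zero]
    norm_num
  have hcardF : ((F.card : ℝ)) ≤ (K + 1) ^ (N + 1) := by
    have h1 : F.card = (⌊K⌋₊ + 1) ^ (N + 1) := by
      rw [hFdef, Fintype.card_piFinset]
      simp [Finset.card_range]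
    rw [h1]
    push_cast
    refine pow_le_pow_left₀ (by positivity) ?_ _
    have := Nat.floor_le hK_pos.le
    linarith
  have htot : ∑' m : Fin (N + 1) → ℕ, ‖W (e m)‖ ^ 2 ≤
      (K + 1) ^ (N + 1) * (A ^ 2 * (G * (4 * N))) := by
    rw [tsum_eq_sum hzeroF]
    calc ∑ m ∈ F, ‖W (e m)‖ ^ 2 ≤ ∑ m ∈ F, A ^ 2 * (G * (4 * N)) :=
        Finset.sum_le_sum fun m _ => hBm m
      _ = (F.card : ℝ) * (A ^ 2 * (G * (4 * N))) := by
          rw [Finset.sum_const, nsmul_eq_mul]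
      _ ≤ (K + 1) ^ (N + 1) * (A ^ 2 * (G * (4 * N))) :=
          mul_le_mul_of_nonneg_right hcardF (by positivity)
  -- final algebra
  set R : ℝ := 2 * Real.sqrt G * Real.sqrt N * (K + 1) ^ (((N : ℝ) + 3) / 2) *
    Real.exp (|s| * Δ) with hRdef
  have hrpow_nonneg : (0:ℝ) ≤ (K + 1) ^ (((N : ℝ) + 3) / 2) := Real.rpow_nonneg hK1 _
  have hR_nonneg : 0 ≤ R := by
    rw [hRdef]
    exact mul_nonneg (mul_nonneg (mul_nonneg
      (mul_nonneg (by norm_num) (Real.sqrt_nonneg _)) (Real.sqrt_nonneg _))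
      hrpow_nonneg) (Real.exp_pos _).le
  have hRsq : (K + 1) ^ (N + 1) * (A ^ 2 * (G * (4 * N))) = R ^ 2 := by
    have h1 : ((K + 1) ^ (((N : ℝ) + 3) / 2)) ^ 2 = (K + 1) ^ (N + 3 : ℕ) := by
      rw [← Real.rpow_natCast ((K + 1) ^ (((N : ℝ) + 3) / 2)) 2, ← Real.rpow_mul hK1]
      rw [show (((N : ℝ) + 3) / 2) * (2 : ℕ) = (N : ℝ) + 3 by push_cast; ring]
      rw [show ((N : ℝ) + 3) = ((N + 3 : ℕ) : ℝ) by push_cast; ring]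
      rw [Real.rpow_natCast]
    have h2 : Real.sqrt G ^ 2 = G := Real.sq_sqrt hG_nonneg
    have h3 : Real.sqrt (N : ℝ) ^ 2 = (N : ℝ) := Real.sq_sqrt (Nat.cast_nonneg _)
    rw [hRdef, mul_pow, mul_pow, mul_pow, mul_pow, mul_pow, h1, h2, h3]
    rw [show (N + 3 : ℕ) = (N + 1) + 2 from by ring, pow_add]
    ring
  rw [show hsNorm e W = Real.sqrt (∑' i : Fin (N + 1) → ℕ, ‖W (e i)‖ ^ 2) from rfl]
  calc Real.sqrt (∑' i : Fin (N + 1) → ℕ, ‖W (e i)‖ ^ 2) ≤ Real.sqrt (R ^ 2) :=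
      Real.sqrt_le_sqrt (by rw [← hRsq]; exact htot)
    _ = R := Real.sqrt_sq hR_nonneg
end
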